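/- Let C ≥ 2 and let q = (q_1, …, q_C, q_cs) be a probability vector on C+1 categories. Then ãmb(q) ≥ amb(q), and moreover 0 ≤ ãmb(q) ≤ 1. -/

import Mathlib

open Finset

/-- The ambiguity measure of a probability vector `(q₁, …, q_C, q_cs)` on `C+1`
categories: `1` if `q_cs = 1`, and `1 - (1/(1-q_cs)) ∑ q_k²` otherwise. -/
noncomputable def amb (C : ℕ) (q : Fin C → ℝ) (qcs : ℝ) : ℝ :=
  if qcs = 1 then 1 else 1 - (1 / (1 - qcs)) * ∑ k, (q k) ^ 2

/-- The modified ambiguity measure: `1` if `q_cs = 1`, and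
`q_cs + (C/(C-1))·[(1-q_cs) - (1/(1-q_cs)) ∑ q_k²]` otherwise. -/
noncomputable def ambMod (C : ℕ) (q : Fin C → ℝ) (qcs : ℝ) : ℝ :=
  if qcs = 1 then 1
  else qcs + ((C : ℝ) / ((C : ℝ) - 1)) *
    ((1 - qcs) - (1 / (1 - qcs)) * ∑ k, (q k) ^ 2)

/-- The modified ambiguity measure dominates the unmodified ambiguity measure,
and it also takes values in the unit interval `[0, 1]`. -/
theorem ambMod_ge_amb_and_mem_unit_interval
    (C : ℕ) (hC : 2 ≤ C) (q : Fin C → ℝ) (qcs : ℝ)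
    (hq : ∀ k, 0 ≤ q k) (hqcs : 0 ≤ qcs)
    (hsum : (∑ k, q k) + qcs = 1) :
    amb C q qcs ≤ ambMod C q qcs
    ∧ 0 ≤ ambMod C q qcs ∧ ambMod C q qcs ≤ 1 := by
  have hsum' : ∑ k, q k = 1 - qcs := by linarith
  by_cases h1 : qcs = 1
  · simp [amb, ambMod, h1]
  · have hs0 : 0 ≤ ∑ k, q k := Finset.sum_nonneg fun k _ => hq k
    have hqcs1 : qcs < 1 := lt_of_le_of_ne (by linarith) h1
    have hs : (0:ℝ) < 1 - qcs := by linarith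
    set Q := ∑ k, (q k) ^ 2 with hQdef
    have hQ0 : 0 ≤ Q := Finset.sum_nonneg fun k _ => sq_nonneg _
    have hQs2 : Q ≤ (1 - qcs) ^ 2 := by
      rw [← hsum']
      exact Finset.sum_sq_le_sq_sum_of_nonneg fun k _ => hq k
    have hCS : (1 - qcs) ^ 2 ≤ (C : ℝ) * Q := by
      rw [← hsum']
      have h := sq_sum_le_card_mul_sum_sq (s := (Finset.univ : Finset (Fin C)))
        (f := q)
      simpa using h
    set A := (1 / (1 - qcs)) * Q with hAdef
    have hA0 : 0 ≤ A := by positivity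
    have hAQ : A * (1 - qcs) = Q := by
      rw [hAdef]
      field_simp [hs.ne']
    have hAle : A ≤ 1 - qcs := by
      rw [hAdef, one_div, inv_mul_le_iff₀ hs]
      nlinarith
    have hAge : 1 - qcs ≤ (C : ℝ) * A := by
      have : (1 - qcs) * (1 - qcs) ≤ ((C : ℝ) * A) * (1 - qcs) := by
        nlinarith
      exact le_of_mul_le_mul_right this hs
    have hC1 : (1:ℝ) ≤ (C:ℝ) - 1 := by
      have : (2:ℝ) ≤ (C:ℝ) := by exact_mod_cast hC
      linarith
    have hC1pos : (0:ℝ) < (C:ℝ) - 1 := by linarith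
    have hr1 : (1:ℝ) ≤ (C:ℝ) / ((C:ℝ) - 1) := by
      rw [le_div_iff₀ hC1pos]; linarith
    have hr2 : ((C:ℝ) / ((C:ℝ) - 1)) * ((1 - qcs) - A) ≤ 1 - qcs := by
      rw [div_mul_eq_mul_div, div_le_iff₀ hC1pos]
      nlinarith
    simp only [amb, ambMod, if_neg h1, ← hQdef, ← hAdef]
    refine ⟨?_, ?_, ?_⟩
    · nlinarith
    · nlinarith
    · nlinarith
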